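/- The braid group of the sphere Br_n(S²) admits a presentation with two generators δ₁ and δ, subject to the relations δ₁δⁱδ₁δ⁻ⁱ = δⁱδ₁δ⁻ⁱδ₁ for 2 ≤ i ≤ n/2, δⁿ = (δδ₁)ⁿ⁻¹, and δⁿ(δ₁δ⁻¹)ⁿ⁻¹ = 1. That is, this presented group is isomorphic to the group with the Zariski–Fadell–Van Buskirk presentation. -/

import Mathlib

/-- Relators of the Zariski–Fadell–Van Buskirk presentation of the sphere braid group
`Br_n(S²)`, with generators `δ_{i+1}` indexed by `i : Fin (n-1)`.  The last relator is
`δ₁δ₂⋯δ_{n-2}δ_{n-1}²δ_{n-2}⋯δ₂δ₁ = (δ₁⋯δ_{n-1})·(δ_{n-1}⋯δ₁)`. -/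
def sphereBraidRels (n : ℕ) : Set (FreeGroup (Fin (n - 1))) :=
  {r | ∃ i j : Fin (n - 1), (i : ℕ) + 1 < (j : ℕ) ∧
      r = .of i * .of j * (.of i)⁻¹ * (.of j)⁻¹} ∪
  {r | ∃ (i : ℕ) (h : i + 1 < n - 1),
      r = .of ⟨i, by omega⟩ * .of ⟨i + 1, h⟩ * .of ⟨i, by omega⟩ *
        (.of ⟨i + 1, h⟩ * .of ⟨i, by omega⟩ * .of ⟨i + 1, h⟩)⁻¹} ∪
  {(List.ofFn (fun i : Fin (n - 1) => (FreeGroup.of i))).prod *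
    (List.ofFn (fun i : Fin (n - 1) => (FreeGroup.of i))).reverse.prod}

/-- Two-generator relators for the sphere braid group: generator `true` is `δ₁`,
generator `false` is `δ`. -/
def sphereTwoGenRels (n : ℕ) : Set (FreeGroup Bool) :=
  {r | ∃ i : ℕ, 2 ≤ i ∧ i ≤ n / 2 ∧
      r = .of true * (.of false) ^ i * .of true * ((.of false : FreeGroup Bool) ^ i)⁻¹ *
        ((.of false : FreeGroup Bool) ^ i * .of true * ((.of false : FreeGroup Bool) ^ i)⁻¹ *
          .of true)⁻¹} ∪
  {(.of false : FreeGroup Bool) ^ n * ((.of false * .of true : FreeGroup Bool) ^ (n - 1))⁻¹} ∪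
  {(.of false : FreeGroup Bool) ^ n * (.of true * (.of false : FreeGroup Bool)⁻¹) ^ (n - 1)}

theorem relOne {α : Type*} {rels : Set (FreeGroup α)} {r} (h : r ∈ rels) :
    PresentedGroup.mk rels r = 1 :=
  (QuotientGroup.eq_one_iff r).mpr (Subgroup.subset_normalClosure h)

namespace SBG

variable (n : ℕ)

abbrev G := PresentedGroup (sphereBraidRels n)

/-- the `m`-th generator, clamped to `1` out of range -/
def gg (m : ℕ) : G n := if h : m < n - 1 then PresentedGroup.of ⟨m, h⟩ else 1

/-- product `gg a * gg (a+1) * ⋯ * gg (a+l-1)` -/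
def tp : ℕ → ℕ → G n
  | _, 0 => 1
  | a, l + 1 => gg n a * tp (a + 1) l

/-- reversed product `gg (m-1) * ⋯ * gg 0` -/
def rq : ℕ → G n
  | 0 => 1
  | m + 1 => gg n m * rq m

def Del : G n := tp n 0 (n - 1)

variable {n}

theorem gg_comm {j m : ℕ} (h : j + 2 ≤ m) : gg n j * gg n m = gg n m * gg n j := by
  unfold gg
  by_cases hm : m < n - 1
  · have hj : j < n - 1 := by omega
    rw [dif_pos hm, dif_pos hj]
    rw [← commutatorElement_eq_one_iff_mul_comm]
    have := relOne (rels := sphereBraidRels n)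
      (Or.inl (Or.inl ⟨⟨j, hj⟩, ⟨m, hm⟩, by show j + 1 < m; omega, rfl⟩))
    simp only [map_mul, map_inv] at this
    rw [commutatorElement_def]
    exact this
  · rw [dif_neg hm]; group

theorem gg_braid {j : ℕ} (h : j + 2 ≤ n - 1) :
    gg n j * gg n (j + 1) * gg n j = gg n (j + 1) * gg n j * gg n (j + 1) := by
  have hj1 : j + 1 < n - 1 := by omega
  have hj : j < n - 1 := by omega
  unfold gg
  rw [dif_pos hj1, dif_pos hj]
  have := relOne (rels := sphereBraidRels n) (Or.inl (Or.inr ⟨j, hj1, rfl⟩))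
  simp only [map_mul, map_inv] at this
  rw [mul_inv_eq_one] at this
  exact this

theorem tp_comm {j : ℕ} : ∀ (l a : ℕ), j + 2 ≤ a → gg n j * tp n a l = tp n a l * gg n j
  | 0, a, _ => by simp [tp]
  | l + 1, a, h => by
    rw [tp, ← mul_assoc, gg_comm (m := a) (by omega), mul_assoc,
      tp_comm l (a+1) (by omega), ← mul_assoc]

theorem tp_comm' {m : ℕ} : ∀ (l a : ℕ), a + l + 1 ≤ m → tp n a l * gg n m = gg n m * tp n a l
  | 0, a, _ => by simp [tp]
  | l + 1, a, h => by
    rw [tp, mul_assoc, tp_comm' l (a+1) (by omega), ← mul_assoc,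
      gg_comm (j := a) (m := m) (by omega), mul_assoc]

theorem tp_split : ∀ (l₁ l₂ a : ℕ), tp n a (l₁ + l₂) = tp n a l₁ * tp n (a + l₁) l₂
  | 0, l₂, a => by simp [tp]
  | l₁ + 1, l₂, a => by
    have h1 : l₁ + 1 + l₂ = (l₁ + l₂) + 1 := by omega
    have h2 : a + (l₁ + 1) = (a + 1) + l₁ := by omega
    rw [h1, tp, tp, tp_split l₁ l₂ (a+1), mul_assoc, h2]

private theorem aux_shift {Gr : Type*} [Group Gr] (A x y T : Gr)
    (c1 : x * T = T * x) (c2 : x * y * x = y * x * y) (c3 : A * y = y * A) :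
    (A * (x * (y * T))) * x = y * (A * (x * (y * T))) := by
  calc (A * (x * (y * T))) * x = A * (x * y * (T * x)) := by group
    _ = A * (x * y * (x * T)) := by rw [← c1]
    _ = A * ((x * y * x) * T) := by group
    _ = A * ((y * x * y) * T) := by rw [c2]
    _ = (A * y) * (x * (y * T)) := by group
    _ = (y * A) * (x * (y * T)) := by rw [c3]
    _ = y * (A * (x * (y * T))) := by group

theorem Del_decomp {j l : ℕ} (hl : n - 1 = j + (l + 1 + 1)) :
    Del n = tp n 0 j * (gg n j * (gg n (j + 1) * tp n (j + 1 + 1) l)) := by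
  calc Del n = tp n 0 (j + (l + 1 + 1)) := congrArg (tp n 0) hl
    _ = tp n 0 j * tp n (0 + j) (l + 1 + 1) := tp_split _ _ _
    _ = tp n 0 j * (gg n j * (gg n (j + 1) * tp n (j + 1 + 1) l)) := by
        rw [Nat.zero_add, tp, tp]

theorem shift {j : ℕ} (h : j + 3 ≤ n) : Del n * gg n j = gg n (j + 1) * Del n := by
  obtain ⟨l, hl⟩ : ∃ l, n - 1 = j + (l + 1 + 1) := ⟨n - 1 - j - 2, by omega⟩
  rw [Del_decomp hl]
  exact aux_shift _ _ _ _ (tp_comm l (j+1+1) (by omega)) (gg_braid (by omega))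
    (tp_comm' j 0 (by omega))

theorem shift_pow {i : ℕ} (h : i + 2 ≤ n) :
    Del n ^ i * gg n 0 = gg n i * Del n ^ i := by
  induction i with
  | zero => simp
  | succ i ih =>
    rw [pow_succ']
    calc Del n * Del n ^ i * gg n 0 = Del n * (gg n i * Del n ^ i) := by
          rw [mul_assoc, ih (by omega)]
      _ = (Del n * gg n i) * Del n ^ i := by group
      _ = gg n (i + 1) * (Del n * Del n ^ i) := by rw [shift (by omega), mul_assoc]

private theorem conj_inv {Gr : Type*} [Group Gr] {d r y : Gr} (h : d * r = y * d) :
    d * r⁻¹ = y⁻¹ * d := by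
  calc d * r⁻¹ = y⁻¹ * (y * d) * r⁻¹ := by group
    _ = y⁻¹ * (d * r) * r⁻¹ := by rw [h]
    _ = y⁻¹ * d := by group

theorem shift_tp : ∀ (l a : ℕ), a + l + 2 ≤ n → Del n * tp n a l = tp n (a + 1) l * Del n
  | 0, a, _ => by simp [tp]
  | l + 1, a, h => by
    calc Del n * tp n a (l + 1) = (Del n * gg n a) * tp n (a + 1) l := by rw [tp]; group
      _ = gg n (a + 1) * (Del n * tp n (a + 1) l) := by rw [shift (by omega)]; group
      _ = gg n (a + 1) * (tp n (a + 1 + 1) l * Del n) := by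
          rw [shift_tp l (a + 1) (by omega)]
      _ = tp n (a + 1) (l + 1) * Del n := by rw [tp]; group

theorem DelP_aux : ∀ (k : ℕ), k + 2 ≤ n → (Del n * gg n 0) ^ k = tp n 1 k * Del n ^ k
  | 0, _ => by simp [tp]
  | k + 1, h => by
    calc (Del n * gg n 0) ^ (k + 1) = (Del n * gg n 0) * (Del n * gg n 0) ^ k := by
          rw [pow_succ']
      _ = (Del n * gg n 0) * (tp n 1 k * Del n ^ k) := by rw [DelP_aux k (by omega)]
      _ = Del n * (gg n 0 * tp n 1 k) * Del n ^ k := by group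
      _ = Del n * tp n 0 (k + 1) * Del n ^ k := by rw [tp]
      _ = (tp n 1 (k + 1) * Del n) * Del n ^ k := by rw [shift_tp (k+1) 0 (by omega)]
      _ = tp n 1 (k + 1) * Del n ^ (k + 1) := by rw [pow_succ']; group

theorem DelP (hn : 2 ≤ n) : (Del n * gg n 0) ^ (n - 1) = Del n ^ n := by
  obtain ⟨m, rfl⟩ : ∃ m, n = m + 2 := ⟨n - 2, by omega⟩
  have h1 : m + 2 - 1 = m + 1 := rfl
  have hD : Del (m + 2) = tp (m + 2) 0 (m + 1) := by rw [Del, h1]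
  calc (Del (m+2) * gg (m+2) 0) ^ (m + 2 - 1)
      = (Del (m+2) * gg (m+2) 0) * (Del (m+2) * gg (m+2) 0) ^ m := by
        rw [show (Del (m+2) * gg (m+2) 0) ^ (m + 2 - 1)
          = (Del (m+2) * gg (m+2) 0) ^ (m + 1) from rfl, pow_succ']
    _ = (Del (m+2) * gg (m+2) 0) * (tp (m+2) 1 m * Del (m+2) ^ m) := by
        rw [DelP_aux m (by omega)]
    _ = Del (m+2) * (gg (m+2) 0 * tp (m+2) 1 m) * Del (m+2) ^ m := by group
    _ = Del (m+2) * Del (m+2) * Del (m+2) ^ m := by rw [← tp, ← hD]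
    _ = Del (m+2) ^ (m + 2) := by group

theorem rq_shift : ∀ (m : ℕ), m + 2 ≤ n → Del n * rq n m = rq n (m + 1) * (gg n 0)⁻¹ * Del n
  | 0, _ => by simp [rq]
  | m + 1, h => by
    calc Del n * rq n (m + 1) = (Del n * gg n m) * rq n m := by rw [rq]; group
      _ = gg n (m + 1) * (Del n * rq n m) := by rw [shift (by omega)]; group
      _ = gg n (m + 1) * (rq n (m + 1) * (gg n 0)⁻¹ * Del n) := by rw [rq_shift m (by omega)]
      _ = rq n (m + 1 + 1) * (gg n 0)⁻¹ * Del n := by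
          conv_rhs => rw [rq]
          group

theorem DelQ_aux : ∀ (k : ℕ), k + 2 ≤ n →
    (Del n * (gg n 0)⁻¹) ^ k = gg n 0 * (rq n (k + 1))⁻¹ * Del n ^ k
  | 0, _ => by simp [rq]
  | k + 1, h => by
    have h2 : Del n * (rq n (k + 1))⁻¹ = (rq n (k + 1 + 1) * (gg n 0)⁻¹)⁻¹ * Del n :=
      conj_inv (by rw [rq_shift (k + 1) (by omega)])
    calc (Del n * (gg n 0)⁻¹) ^ (k + 1)
        = (Del n * (gg n 0)⁻¹) * (Del n * (gg n 0)⁻¹) ^ k := by rw [pow_succ']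
      _ = (Del n * (gg n 0)⁻¹) * (gg n 0 * (rq n (k + 1))⁻¹ * Del n ^ k) := by
          rw [DelQ_aux k (by omega)]
      _ = (Del n * (rq n (k + 1))⁻¹) * Del n ^ k := by group
      _ = ((rq n (k + 1 + 1) * (gg n 0)⁻¹)⁻¹ * Del n) * Del n ^ k := by rw [h2]
      _ = gg n 0 * (rq n (k + 1 + 1))⁻¹ * Del n ^ (k + 1) := by rw [pow_succ']; group

theorem ofFn_gg_prod : ∀ (l a : ℕ),
    (List.ofFn (fun i : Fin l => gg n (a + i.val))).prod = tp n a l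
  | 0, a => by simp [tp]
  | l + 1, a => by
    rw [List.ofFn_succ, List.prod_cons]
    have h1 : (fun i : Fin l => gg n (a + (i.succ : Fin (l+1)).val))
        = fun i : Fin l => gg n ((a + 1) + i.val) := by
      funext i
      congr 1
      simp [Fin.val_succ]
      omega
    rw [h1, ofFn_gg_prod l (a + 1), tp]
    norm_num

theorem ofFn_gg_rev : ∀ (m : ℕ),
    (List.ofFn (fun i : Fin m => gg n i.val)).reverse.prod = rq n m
  | 0 => by simp [rq]
  | m + 1 => by
    rw [List.ofFn_succ', List.concat_eq_append, List.reverse_append]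
    simp only [List.reverse_cons, List.reverse_nil, List.nil_append, List.singleton_append,
      List.prod_cons, Fin.val_last, Fin.coe_castSucc]
    rw [ofFn_gg_rev m, rq]

theorem gg_eq_of {i : Fin (n - 1)} : gg n i.val = PresentedGroup.of i := by
  rw [gg, dif_pos i.isLt]

theorem of_eq_gg : (fun i : Fin (n-1) => (PresentedGroup.of i : G n))
    = fun i : Fin (n-1) => gg n (0 + i.val) := by
  funext i
  rw [Nat.zero_add, gg_eq_of]

theorem ofFn_of_prod :
    (List.ofFn (fun i : Fin (n-1) => (PresentedGroup.of i : G n))).prod = Del n := by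
  rw [Del, of_eq_gg, ofFn_gg_prod (n-1) 0]

theorem of_eq_gg' : (fun i : Fin (n-1) => (PresentedGroup.of i : G n))
    = fun i : Fin (n-1) => gg n i.val := by
  funext i
  rw [gg_eq_of]

theorem ofFn_of_rev :
    (List.ofFn (fun i : Fin (n-1) => (PresentedGroup.of i : G n))).reverse.prod = rq n (n-1) := by
  rw [of_eq_gg', ofFn_gg_rev (n-1)]

theorem sphere_rel : Del n * rq n (n - 1) = 1 := by
  have h := relOne (rels := sphereBraidRels n) (Or.inr rfl)
  rw [map_mul, MonoidHom.map_list_prod, MonoidHom.map_list_prod, List.map_reverse,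
    List.map_ofFn] at h
  have hc : ((PresentedGroup.mk (sphereBraidRels n)) ∘ fun i : Fin (n-1) => FreeGroup.of i)
      = fun i : Fin (n-1) => (PresentedGroup.of i : G n) := rfl
  rw [hc, ofFn_of_prod, ofFn_of_rev] at h
  exact h

theorem DelQ (hn : 2 ≤ n) : (Del n * (gg n 0)⁻¹) ^ (n - 1) = Del n ^ n := by
  obtain ⟨m, rfl⟩ : ∃ m, n = m + 2 := ⟨n - 2, by omega⟩
  have hq : (rq (m+2) (m + 1))⁻¹ = Del (m+2) := by
    have := sphere_rel (n := m + 2)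
    rw [mul_eq_one_iff_inv_eq] at this
    rw [show rq (m+2) (m+1) = rq (m+2) (m + 2 - 1) from rfl, ← this, inv_inv]
  calc (Del (m+2) * (gg (m+2) 0)⁻¹) ^ (m + 2 - 1)
      = (Del (m+2) * (gg (m+2) 0)⁻¹) * (Del (m+2) * (gg (m+2) 0)⁻¹) ^ m := by
        rw [show (Del (m+2) * (gg (m+2) 0)⁻¹) ^ (m + 2 - 1)
          = (Del (m+2) * (gg (m+2) 0)⁻¹) ^ (m + 1) from rfl, pow_succ']
    _ = (Del (m+2) * (gg (m+2) 0)⁻¹) * (gg (m+2) 0 * (rq (m+2) (m + 1))⁻¹ * Del (m+2) ^ m) := by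
        rw [DelQ_aux m (by omega)]
    _ = Del (m+2) * (rq (m+2) (m + 1))⁻¹ * Del (m+2) ^ m := by group
    _ = Del (m+2) * Del (m+2) * Del (m+2) ^ m := by rw [hq]
    _ = Del (m+2) ^ (m + 2) := by group

end SBG

namespace SBG

variable (n : ℕ)

abbrev Hgp := PresentedGroup (sphereTwoGenRels n)

def aa : Hgp n := PresentedGroup.of true
def bb : Hgp n := PresentedGroup.of false

/-- `δ_{k+1}` as an element of the two-generator group -/
def s (k : ℕ) : Hgp n := bb n ^ k * aa n * (bb n ^ k)⁻¹

def u : ℕ → ℕ → Hgp n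
  | _, 0 => 1
  | j, l + 1 => s n j * u (j + 1) l

def rv : ℕ → Hgp n
  | 0 => 1
  | m + 1 => s n m * rv m

variable {n}

theorem relC {i : ℕ} (h2 : 2 ≤ i) (hhalf : i ≤ n / 2) :
    aa n * s n i = s n i * aa n := by
  have h := relOne (rels := sphereTwoGenRels n) (Or.inl (Or.inl ⟨i, h2, hhalf, rfl⟩))
  simp only [map_mul, map_pow, map_inv] at h
  rw [mul_inv_eq_one] at h
  change aa n * bb n ^ i * aa n * (bb n ^ i)⁻¹ = bb n ^ i * aa n * (bb n ^ i)⁻¹ * aa n at h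
  rw [s, ← mul_assoc, ← mul_assoc]
  exact h

theorem relP : bb n ^ n = (bb n * aa n) ^ (n - 1) := by
  have h := relOne (rels := sphereTwoGenRels n) (Or.inl (Or.inr rfl))
  simp only [map_mul, map_pow, map_inv] at h
  rw [mul_inv_eq_one] at h
  exact h

theorem relQ : bb n ^ n * (aa n * (bb n)⁻¹) ^ (n - 1) = 1 := by
  have h := relOne (rels := sphereTwoGenRels n) (Or.inr rfl)
  simp only [map_mul, map_pow, map_inv] at h
  exact h

theorem bn_comm_aa : aa n * bb n ^ n = bb n ^ n * aa n := by
  have e1 : aa n * bb n ^ n * (aa n)⁻¹ = (aa n * bb n) ^ (n - 1) := by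
    rw [relP]
    calc aa n * (bb n * aa n) ^ (n-1) * (aa n)⁻¹
        = (aa n * (bb n * aa n) * (aa n)⁻¹) ^ (n-1) := by rw [conj_pow]
      _ = (aa n * bb n) ^ (n - 1) := by group
  have e2 : (bb n)⁻¹ * bb n ^ n * bb n = (aa n * bb n) ^ (n - 1) := by
    rw [relP]
    calc (bb n)⁻¹ * (bb n * aa n) ^ (n-1) * bb n
        = ((bb n)⁻¹ * (bb n * aa n) * (bb n)⁻¹⁻¹) ^ (n-1) := by rw [conj_pow, inv_inv]
      _ = (aa n * bb n) ^ (n - 1) := by group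
  have e3 : (bb n)⁻¹ * bb n ^ n * bb n = bb n ^ n := by group
  have := e1.trans (e2.symm.trans e3)
  calc aa n * bb n ^ n = (aa n * bb n ^ n * (aa n)⁻¹) * aa n := by group
    _ = bb n ^ n * aa n := by rw [this]

theorem s_period (k : ℕ) : s n (k + n) = s n k := by
  have h : bb n ^ n * aa n * (bb n ^ n)⁻¹ = aa n := by rw [← bn_comm_aa]; group
  rw [s, s, pow_add]
  calc bb n ^ k * bb n ^ n * aa n * (bb n ^ k * bb n ^ n)⁻¹
      = bb n ^ k * (bb n ^ n * aa n * (bb n ^ n)⁻¹) * (bb n ^ k)⁻¹ := by group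
    _ = bb n ^ k * aa n * (bb n ^ k)⁻¹ := by rw [h]

theorem s_zero : s n 0 = aa n := by rw [s]; group

theorem s_add (j k : ℕ) : s n (j + k) = bb n ^ j * s n k * (bb n ^ j)⁻¹ := by
  rw [s, s, pow_add]
  group

theorem comm_small {j d : ℕ} (h2 : 2 ≤ d) (hh : d ≤ n / 2) :
    s n j * s n (j + d) = s n (j + d) * s n j := by
  have h := relC h2 hh
  calc s n j * s n (j + d)
      = bb n ^ j * (aa n * s n d) * (bb n ^ j)⁻¹ := by rw [s_add j d, s]; group
    _ = bb n ^ j * (s n d * aa n) * (bb n ^ j)⁻¹ := by rw [h]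
    _ = s n (j + d) * s n j := by rw [s_add j d, s, s]; group

theorem comm_all {j d : ℕ} (h2 : 2 ≤ d) (hd : d + 2 ≤ n) :
    s n j * s n (j + d) = s n (j + d) * s n j := by
  by_cases hh : d ≤ n / 2
  · exact comm_small h2 hh
  · have key := comm_small (n := n) (j := j + d) (d := n - d) (by omega) (by omega)
    rw [show j + d + (n - d) = j + n from by omega, s_period] at key
    exact key.symm

theorem u_shift : ∀ (l j : ℕ), u n (j + 1) l = bb n * u n j l * (bb n)⁻¹
  | 0, _ => by simp [u]
  | l + 1, j => by
    have hs : s n (j + 1) = bb n * s n j * (bb n)⁻¹ := by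
      rw [show j + 1 = 1 + j from by omega, s_add 1 j, pow_one]
    rw [u, u_shift l (j + 1), hs]
    conv_rhs => rw [u]
    group

theorem u_prod : ∀ (m : ℕ), u n 0 m * bb n ^ m = (aa n * bb n) ^ m
  | 0 => by simp [u]
  | m + 1 => by
    calc u n 0 (m + 1) * bb n ^ (m + 1)
        = (aa n * (bb n * u n 0 m * (bb n)⁻¹)) * bb n ^ (m + 1) := by
          rw [u, u_shift m 0, s_zero]
      _ = (aa n * bb n) * (u n 0 m * bb n ^ m) := by rw [pow_succ']; group
      _ = (aa n * bb n) * (aa n * bb n) ^ m := by rw [u_prod m]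
      _ = (aa n * bb n) ^ (m + 1) := by rw [pow_succ']

theorem ab_pow (hn : 2 ≤ n) : (aa n * bb n) ^ (n - 1) = bb n ^ n := by
  calc (aa n * bb n) ^ (n-1) = ((bb n)⁻¹ * (bb n * aa n) * (bb n)⁻¹⁻¹) ^ (n-1) := by group
    _ = (bb n)⁻¹ * (bb n * aa n) ^ (n-1) * bb n := by rw [conj_pow, inv_inv]
    _ = (bb n)⁻¹ * bb n ^ n * bb n := by rw [relP]
    _ = bb n ^ n := by group

theorem b_eq (hn : 2 ≤ n) : u n 0 (n - 1) = bb n := by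
  obtain ⟨m, rfl⟩ : ∃ m, n = m + 2 := ⟨n - 2, by omega⟩
  have h := u_prod (n := m + 2) (m + 1)
  rw [show (m+1 : ℕ) = (m+2) - 1 from rfl, ab_pow (by omega)] at h
  have : u (m+2) 0 (m + 2 - 1) = bb (m+2) ^ (m+2) * (bb (m+2) ^ (m + 2 - 1))⁻¹ := by
    rw [← h]; group
  rw [this]
  show bb (m+2) ^ (m+1+1) * (bb (m+2) ^ (m+1))⁻¹ = bb (m+2)
  rw [pow_succ]
  group

theorem a'b_pow : ((aa n)⁻¹ * bb n) ^ (n - 1) = bb n ^ n := by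
  have h1 : (aa n * (bb n)⁻¹) ^ (n - 1) = (bb n ^ n)⁻¹ :=
    eq_inv_of_mul_eq_one_right relQ
  calc ((aa n)⁻¹ * bb n) ^ (n - 1)
      = (((bb n)⁻¹ * aa n)⁻¹) ^ (n - 1) := by rw [mul_inv_rev, inv_inv]
    _ = (((bb n)⁻¹ * aa n) ^ (n - 1))⁻¹ := by rw [inv_pow]
    _ = (((bb n)⁻¹ * (aa n * (bb n)⁻¹) * (bb n)⁻¹⁻¹) ^ (n - 1))⁻¹ := by congr 2; group
    _ = ((bb n)⁻¹ * (aa n * (bb n)⁻¹) ^ (n - 1) * bb n)⁻¹ := by rw [conj_pow, inv_inv]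
    _ = ((bb n)⁻¹ * (bb n ^ n)⁻¹ * bb n)⁻¹ := by rw [h1]
    _ = bb n ^ n := by group

theorem rv_eq : ∀ (m : ℕ), rv n m = bb n ^ m * (((aa n)⁻¹ * bb n) ^ m)⁻¹
  | 0 => by simp [rv]
  | m + 1 => by
    rw [rv, rv_eq m, s, pow_succ, pow_succ]
    group

theorem rv_b (hn : 2 ≤ n) : rv n (n - 1) = (bb n)⁻¹ := by
  obtain ⟨m, rfl⟩ : ∃ m, n = m + 2 := ⟨n - 2, by omega⟩
  rw [rv_eq, a'b_pow]
  show bb (m+2) ^ (m+1) * (bb (m+2) ^ (m+1+1))⁻¹ = (bb (m+2))⁻¹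
  rw [pow_succ]
  group

private theorem aux_braid {Gr : Type*} [Group Gr] {x y M b' : Gr} (hb : b' = x * (y * M))
    (hc : x * M = M * x) (h1 : y = b' * x * b'⁻¹) : x * y * x = y * x * y := by
  have key : y = x * y * x * y⁻¹ * x⁻¹ := by
    calc y = b' * x * b'⁻¹ := h1
      _ = (x * (y * M)) * x * (x * (y * M))⁻¹ := by rw [hb]
      _ = x * y * (M * x * M⁻¹) * y⁻¹ * x⁻¹ := by group
      _ = x * y * x * y⁻¹ * x⁻¹ := by rw [show M * x * M⁻¹ = x from by rw [← hc]; group]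
  calc x * y * x = (x * y * x * y⁻¹ * x⁻¹) * (x * y) := by group
    _ = y * (x * y) := by rw [← key]
    _ = y * x * y := by group

theorem u_comm_a : ∀ (l a : ℕ), 2 ≤ a → a + l + 1 ≤ n → aa n * u n a l = u n a l * aa n
  | 0, a, _, _ => by simp [u]
  | l + 1, a, h2, hl => by
    have hs : aa n * s n a = s n a * aa n := by
      have := comm_all (n := n) (j := 0) (d := a) h2 (by omega)
      rw [s_zero, show 0 + a = a from by omega] at this
      exact this
    rw [u, ← mul_assoc, hs, mul_assoc, u_comm_a l (a + 1) (by omega) (by omega), ← mul_assoc]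

theorem s_one : s n 1 = bb n * aa n * (bb n)⁻¹ := by
  rw [s, pow_one]

theorem braid0 (h3 : 3 ≤ n) : s n 0 * s n 1 * s n 0 = s n 1 * s n 0 * s n 1 := by
  obtain ⟨m, rfl⟩ : ∃ m, n = m + 3 := ⟨n - 3, by omega⟩
  have hb : bb (m+3) = s (m+3) 0 * (s (m+3) 1 * u (m+3) 2 m) := by
    rw [← b_eq (n := m + 3) (by omega), show ((m+3) : ℕ) - 1 = m + 2 from rfl, u, u]
  have hc : s (m+3) 0 * u (m+3) 2 m = u (m+3) 2 m * s (m+3) 0 := by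
    rw [s_zero]
    exact u_comm_a m 2 (by omega) (by omega)
  have h1 : s (m+3) 1 = bb (m+3) * s (m+3) 0 * (bb (m+3))⁻¹ := by
    rw [s_one, s_zero]
  exact aux_braid hb hc h1

theorem braid_all {j : ℕ} (h : j + 3 ≤ n) :
    s n j * s n (j + 1) * s n j = s n (j + 1) * s n j * s n (j + 1) := by
  have h0 := braid0 (n := n) (by omega)
  have hj : s n j = bb n ^ j * s n 0 * (bb n ^ j)⁻¹ := by
    rw [s_zero, s]
  calc s n j * s n (j + 1) * s n j
      = bb n ^ j * (s n 0 * s n 1 * s n 0) * (bb n ^ j)⁻¹ := by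
        rw [hj, s_add j 1]; group
    _ = bb n ^ j * (s n 1 * s n 0 * s n 1) * (bb n ^ j)⁻¹ := by rw [h0]
    _ = s n (j + 1) * s n j * s n (j + 1) := by rw [hj, s_add j 1]; group

theorem ofFn_s_prod : ∀ (l a : ℕ),
    (List.ofFn (fun i : Fin l => s n (a + i.val))).prod = u n a l
  | 0, a => by simp [u]
  | l + 1, a => by
    rw [List.ofFn_succ, List.prod_cons]
    have h1 : (fun i : Fin l => s n (a + (i.succ : Fin (l+1)).val))
        = fun i : Fin l => s n ((a + 1) + i.val) := by
      funext i
      congr 1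
      simp [Fin.val_succ]
      omega
    rw [h1, ofFn_s_prod l (a + 1), u]
    norm_num

theorem ofFn_s_rev : ∀ (m : ℕ),
    (List.ofFn (fun i : Fin m => s n i.val)).reverse.prod = rv n m
  | 0 => by simp [rv]
  | m + 1 => by
    rw [List.ofFn_succ', List.concat_eq_append, List.reverse_append]
    simp only [List.reverse_cons, List.reverse_nil, List.nil_append, List.singleton_append,
      List.prod_cons, Fin.val_last, Fin.coe_castSucc]
    rw [ofFn_s_rev m, rv]


variable (n : ℕ)

def fphi : Bool → G n
  | true => gg n 0
  | false => Del n

def fpsi : Fin (n - 1) → Hgp n := fun i => s n i.val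

variable {n}

private theorem aux_C {Gr : Type*} [Group Gr] {x y D : Gr} {i : ℕ}
    (hs : D ^ i * x = y * D ^ i) (hc : x * y = y * x) :
    x * D ^ i * x * (D ^ i)⁻¹ * (D ^ i * x * (D ^ i)⁻¹ * x)⁻¹ = 1 := by
  have h1 : D ^ i * x * (D ^ i)⁻¹ = y := by rw [hs]; group
  calc x * D ^ i * x * (D ^ i)⁻¹ * (D ^ i * x * (D ^ i)⁻¹ * x)⁻¹
      = x * (D ^ i * x * (D ^ i)⁻¹) * ((D ^ i * x * (D ^ i)⁻¹) * x)⁻¹ := by group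
    _ = x * y * (y * x)⁻¹ := by rw [h1]
    _ = x * y * (x * y)⁻¹ := by rw [← hc]
    _ = 1 := by group

theorem hphi (hn : 2 ≤ n) : ∀ r ∈ sphereTwoGenRels n, FreeGroup.lift (fphi n) r = 1 := by
  intro r hr
  rcases hr with (⟨i, h2, hh, rfl⟩ | hr) | hr
  · simp only [map_mul, map_pow, map_inv, FreeGroup.lift_apply_of, fphi]
    exact aux_C (shift_pow (by omega)) (gg_comm (by omega))
  · rw [Set.mem_singleton_iff] at hr
    subst hr
    simp only [map_mul, map_pow, map_inv, FreeGroup.lift_apply_of, fphi]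
    rw [DelP hn]
    group
  · rw [Set.mem_singleton_iff] at hr
    subst hr
    simp only [map_mul, map_pow, map_inv, FreeGroup.lift_apply_of, fphi]
    have h1 : (gg n 0 * (Del n)⁻¹) ^ (n - 1) = ((Del n * (gg n 0)⁻¹) ^ (n - 1))⁻¹ := by
      rw [← inv_pow]
      congr 1
      group
    rw [h1, DelQ hn]
    group

theorem hpsi (hn : 2 ≤ n) : ∀ r ∈ sphereBraidRels n, FreeGroup.lift (fpsi n) r = 1 := by
  intro r hr
  rcases hr with (⟨i, j, hij, rfl⟩ | ⟨i, h, rfl⟩) | hr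
  · simp only [map_mul, map_inv, FreeGroup.lift_apply_of, fpsi]
    obtain ⟨d, hd⟩ : ∃ d, (j : ℕ) = (i : ℕ) + d := ⟨j - i, by omega⟩
    have hj := j.isLt
    rw [hd, ← commutatorElement_def, commutatorElement_eq_one_iff_mul_comm]
    exact comm_all (by omega) (by omega)
  · simp only [map_mul, map_inv, FreeGroup.lift_apply_of, fpsi]
    rw [mul_inv_eq_one]
    exact braid_all (by omega)
  · rw [Set.mem_singleton_iff] at hr
    subst hr
    rw [map_mul, MonoidHom.map_list_prod, MonoidHom.map_list_prod, List.map_reverse,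
      List.map_ofFn]
    have hc : (⇑(FreeGroup.lift (fpsi n)) ∘ fun i : Fin (n - 1) => FreeGroup.of i)
        = fun i : Fin (n - 1) => s n (0 + i.val) := by
      funext i
      rw [Function.comp_apply, FreeGroup.lift_apply_of, Nat.zero_add]
      rfl
    have hc2 : (fun i : Fin (n - 1) => s n (0 + i.val)) = fun i : Fin (n - 1) => s n i.val := by
      funext i
      rw [Nat.zero_add]
    rw [hc, ofFn_s_prod (n - 1) 0, hc2, ofFn_s_rev (n - 1), b_eq hn, rv_b hn]
    group

def phi (hn : 2 ≤ n) : Hgp n →* G n := PresentedGroup.toGroup (hphi hn)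

def psi (hn : 2 ≤ n) : G n →* Hgp n := PresentedGroup.toGroup (hpsi hn)

theorem phi_aa (hn : 2 ≤ n) : phi hn (aa n) = gg n 0 := by
  rw [aa, phi, PresentedGroup.toGroup.of]
  rfl

theorem phi_bb (hn : 2 ≤ n) : phi hn (bb n) = Del n := by
  rw [bb, phi, PresentedGroup.toGroup.of]
  rfl

theorem psi_gg (hn : 2 ≤ n) {m : ℕ} (h : m < n - 1) : psi hn (gg n m) = s n m := by
  rw [gg, dif_pos h, psi, PresentedGroup.toGroup.of]
  rfl

theorem psi_tp (hn : 2 ≤ n) : ∀ (l a : ℕ), a + l ≤ n - 1 → psi hn (tp n a l) = u n a l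
  | 0, a, _ => by simp [tp, u]
  | l + 1, a, h => by
    rw [tp, u, map_mul, psi_gg hn (by omega), psi_tp hn l (a + 1) (by omega)]

theorem psi_Del (hn : 2 ≤ n) : psi hn (Del n) = bb n := by
  rw [Del, psi_tp hn (n - 1) 0 (by omega), b_eq hn]

theorem psi_phi (hn : 2 ≤ n) : (psi hn).comp (phi hn) = MonoidHom.id (Hgp n) := by
  apply PresentedGroup.ext
  intro x
  cases x with
  | true =>
    rw [MonoidHom.comp_apply, MonoidHom.id_apply]
    rw [show (PresentedGroup.of true : Hgp n) = aa n from rfl, phi_aa hn,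
      psi_gg hn (by omega), s_zero]
  | false =>
    rw [MonoidHom.comp_apply, MonoidHom.id_apply]
    rw [show (PresentedGroup.of false : Hgp n) = bb n from rfl, phi_bb hn, psi_Del hn]

theorem phi_psi (hn : 2 ≤ n) : (phi hn).comp (psi hn) = MonoidHom.id (G n) := by
  apply PresentedGroup.ext
  intro i
  rw [MonoidHom.comp_apply, MonoidHom.id_apply]
  have h1 : psi hn (PresentedGroup.of i) = s n i.val := by
    rw [psi, PresentedGroup.toGroup.of]
    rfl
  rw [h1, s, map_mul, map_mul, map_pow, map_inv, map_pow, phi_aa hn, phi_bb hn,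
    shift_pow (by have := i.isLt; omega)]
  calc gg n i.val * Del n ^ i.val * (Del n ^ i.val)⁻¹ = gg n i.val := by group
    _ = PresentedGroup.of i := gg_eq_of

end SBG


theorem two_generator_presentation_of_sphere_braid_group (n : ℕ) (hn : 2 ≤ n) :
    ∃ e : PresentedGroup (sphereTwoGenRels n) ≃* PresentedGroup (sphereBraidRels n),
      e (.of true) = PresentedGroup.of ⟨0, by omega⟩ ∧
      e (.of false) =
        (List.ofFn (fun i : Fin (n - 1) =>
          (PresentedGroup.of i : PresentedGroup (sphereBraidRels n)))).prod := by
  refine ⟨MonoidHom.toMulEquiv (SBG.phi hn) (SBG.psi hn) (SBG.psi_phi hn) (SBG.phi_psi hn),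
    ?_, ?_⟩
  · show SBG.phi hn (SBG.aa n) = _
    rw [SBG.phi_aa hn, SBG.gg, dif_pos (by omega : 0 < n - 1)]
  · show SBG.phi hn (SBG.bb n) = _
    rw [SBG.phi_bb hn, SBG.ofFn_of_prod]
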